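/- There is no convex differentiable function f : ℝ → ℝ satisfying simultaneously f(−1) = 1, f′(−1) = −2, f(0) = 0, and f′(0) = −1. -/

import Mathlib

/-- The one-dimensional counterexample of Section 2.2 of the paper: no convex
differentiable function `f : ℝ → ℝ` satisfies `f(-1) = 1`, `f'(-1) = -2`,
`f(0) = 0` and `f'(0) = -1`. -/
theorem no_smooth_convex_interpolant_dim1 :
    ¬ ∃ f : ℝ → ℝ, ConvexOn ℝ Set.univ f ∧ Differentiable ℝ f ∧
      f (-1) = 1 ∧ deriv f (-1) = -2 ∧ f 0 = 0 ∧ deriv f 0 = -1 := by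
  rintro ⟨f, hconv, hdiff, hf1, hd1, hf0, hd0⟩
  -- Claim: f x ≥ -x for all x
  have key : ∀ x : ℝ, -x ≤ f x := by
    intro x
    rcases lt_trichotomy x 0 with h | h | h
    · have := hconv.slope_le_deriv (Set.mem_univ x) (Set.mem_univ 0) h
        (hdiff 0)
      rw [hd0, slope_def_field, hf0] at this
      rw [div_le_iff₀ (by linarith : (0:ℝ) < 0 - x)] at this
      linarith
    · simp [h, hf0]
    · have := hconv.deriv_le_slope (Set.mem_univ 0) (Set.mem_univ x) h
        (hdiff 0)
      rw [hd0, slope_def_field, hf0] at this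
      rw [le_div_iff₀ (by linarith : (0:ℝ) < x - 0)] at this
      linarith
  -- g = f + id has a minimum at -1
  have hmin : IsLocalMin (fun x => f x + x) (-1) := by
    apply IsMinOn.isLocalMin (s := Set.univ) _ Filter.univ_mem
    intro x _
    have := key x
    simp only [hf1]
    simp only [Set.mem_setOf_eq]
    linarith
  have hderiv : deriv (fun x => f x + x) (-1) = 0 := hmin.deriv_eq_zero
  have : deriv (fun x => f x + x) (-1) = deriv f (-1) + 1 := by
    rw [deriv_fun_add (hdiff (-1)) differentiableAt_fun_id]
    simp
  rw [this, hd1] at hderiv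
  norm_num at hderiv
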